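/- arXiv:1105.2840 — 6 statements merged into one kernel-verified Lean document; each statement's English description precedes it below -/
import Mathlib

section
/- (Proposition 5.1(i), second part) If Ψ satisfies condition (⋆) and η ≤_Ψ μ ≤_Ψ ν in E, then d_Ψ(η,μ) + d_Ψ(μ,ν) = d_Ψ(η,ν). -/
open Finset

/-- Condition (⋆) for a subset `Ψ` of the finite set of weights `W`. -/
def StarCond {E : Type*} [AddCommGroup E] (W Ψ : Finset E) : Prop :=
  ∀ m r : E → ℕ,
    (∑ α ∈ Ψ, m α • α) = (∑ β ∈ W, r β • β) →
      ((∑ α ∈ Ψ, m α) ≤ (∑ β ∈ W, r β) ∧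
        ((∑ α ∈ Ψ, m α) = (∑ β ∈ W, r β) → ∀ β ∈ W, 0 < r β → β ∈ Ψ))

/-- `μ ≤_Ψ ν` iff `ν - μ` is a `ℤ≥0`-linear combination of elements of `Ψ`. -/
def lePsi {E : Type*} [AddCommGroup E] (Ψ : Finset E) (μ ν : E) : Prop :=
  ∃ m : E → ℕ, ν - μ = ∑ α ∈ Ψ, m α • α

/-- `d_Ψ(μ,ν)`: the minimum total `∑ m_α` over representations
`ν - μ = ∑_{α ∈ Ψ} m_α • α` with `m_α ∈ ℤ≥0`. -/
noncomputable def dPsi {E : Type*} [AddCommGroup E] (Ψ : Finset E) (μ ν : E) : ℕ :=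
  sInf {n : ℕ | ∃ m : E → ℕ, (ν - μ = ∑ α ∈ Ψ, m α • α) ∧ n = ∑ α ∈ Ψ, m α}

/-- Under (⋆), any two representations supported in Ψ of the same element have equal sums. -/
lemma sum_eq_of_star {E : Type*} [AddCommGroup E] (W Ψ : Finset E) (hΨW : Ψ ⊆ W)
    (hstar : StarCond W Ψ) (m m' : E → ℕ)
    (h : ∑ α ∈ Ψ, m α • α = ∑ α ∈ Ψ, m' α • α) :
    ∑ α ∈ Ψ, m α = ∑ α ∈ Ψ, m' α := by
  have key : ∀ a b : E → ℕ, (∑ α ∈ Ψ, a α • α = ∑ α ∈ Ψ, b α • α) →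
      ∑ α ∈ Ψ, a α ≤ ∑ α ∈ Ψ, b α := by
    intro a b hab
    classical
    set r : E → ℕ := fun β => if β ∈ Ψ then b β else 0 with hr
    have h1 : ∑ β ∈ W, r β • β = ∑ β ∈ Ψ, b β • β := by
      rw [← Finset.sum_subset hΨW]
      · exact Finset.sum_congr rfl (fun β hβ => by simp [hr, hβ])
      · intro β _ hβ; simp [hr, hβ]
    have h2 : ∑ β ∈ W, r β = ∑ β ∈ Ψ, b β := by
      rw [← Finset.sum_subset hΨW]
      · exact Finset.sum_congr rfl (fun β hβ => by simp [hr, hβ])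
      · intro β _ hβ; simp [hr, hβ]
    have := (hstar a r (by rw [h1]; exact hab)).1
    rwa [h2] at this
  exact le_antisymm (key m m' h) (key m' m h.symm)

/-- Under (⋆), `dPsi` equals the sum of any representation. -/
lemma dPsi_eq_of_star {E : Type*} [AddCommGroup E] (W Ψ : Finset E) (hΨW : Ψ ⊆ W)
    (hstar : StarCond W Ψ) (μ ν : E) (m : E → ℕ) (h : ν - μ = ∑ α ∈ Ψ, m α • α) :
    dPsi Ψ μ ν = ∑ α ∈ Ψ, m α := by
  have hmem : (∑ α ∈ Ψ, m α) ∈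
      {n : ℕ | ∃ m : E → ℕ, (ν - μ = ∑ α ∈ Ψ, m α • α) ∧ n = ∑ α ∈ Ψ, m α} :=
    ⟨m, h, rfl⟩
  obtain ⟨m', hm', hsum⟩ := Nat.sInf_mem ⟨_, hmem⟩
  rw [dPsi, hsum]
  exact sum_eq_of_star W Ψ hΨW hstar m' m (by rw [← hm', ← h])

theorem dPsi_additive
    (E : Type*) [AddCommGroup E] [Module ℂ E] [FiniteDimensional ℂ E]
    (W Ψ : Finset E) (hΨW : Ψ ⊆ W) (hne : Ψ.Nonempty)
    (hstar : StarCond W Ψ)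
    (η μ ν : E) (h₁ : lePsi Ψ η μ) (h₂ : lePsi Ψ μ ν) :
    dPsi Ψ η μ + dPsi Ψ μ ν = dPsi Ψ η ν := by
  obtain ⟨a, ha⟩ := h₁
  obtain ⟨b, hb⟩ := h₂
  have hab : ν - η = ∑ α ∈ Ψ, (a α + b α) • α := by
    have : ν - η = (μ - η) + (ν - μ) := by abel
    rw [this, ha, hb, ← Finset.sum_add_distrib]
    exact Finset.sum_congr rfl (fun α _ => (add_smul _ _ _).symm)
  rw [dPsi_eq_of_star W Ψ hΨW hstar η μ a ha,
    dPsi_eq_of_star W Ψ hΨW hstar μ ν b hb,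
    dPsi_eq_of_star W Ψ hΨW hstar η ν _ hab,
    ← Finset.sum_add_distrib]
end

section
/- (interval-finiteness, asserted in the abstract) For all (λ,r) ⪯ (μ,s) in Λ = E × ℤ, the interval {(η,t) ∈ Λ : (λ,r) ⪯ (η,t) ⪯ (μ,s)} is a finite set; that is, (Λ, ⪯) is an interval-finite poset. -/
open Finset

/-- The covering relation on `Λ = E × ℤ`: `(μ, s)` covers `(λ, r)` iff `s > r`
and `μ - λ` lies in `W (s - r)`.  Here `covers W x y` means `y` covers `x`. -/
def covers {E : Type*} [AddCommGroup E] (W : ℤ → Finset E) (x y : E × ℤ) : Prop :=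
  x.2 < y.2 ∧ y.1 - x.1 ∈ W (y.2 - x.2)

/-- Iterated sumsets of `S`. -/
noncomputable def sumIter {E : Type*} [AddCommGroup E] [DecidableEq E]
    (S : Finset E) : ℕ → Finset E
  | 0 => {0}
  | (n+1) => Finset.image₂ (· + ·) (sumIter S n) S

lemma sumIter_mono {E : Type*} [AddCommGroup E] [DecidableEq E]
    {S : Finset E} (h0 : (0 : E) ∈ S) : Monotone (sumIter S) := by
  apply monotone_nat_of_le_succ
  intro n e he
  have : e + 0 ∈ sumIter S (n+1) := Finset.mem_image₂_of_mem he h0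
  simpa using this

lemma covers_height_le {E : Type*} [AddCommGroup E] {W : ℤ → Finset E}
    {a b : E × ℤ} (h : Relation.ReflTransGen (covers W) a b) : a.2 ≤ b.2 := by
  induction h with
  | refl => exact le_refl _
  | tail _ hc ih => exact ih.trans hc.1.le

/-- `(Λ, ⪯)` is an interval-finite poset, where `⪯` is the reflexive-transitive
closure of the covering relation. -/
theorem preceq_interval_finite
    (E : Type*) [AddCommGroup E] [Module ℂ E] [FiniteDimensional ℂ E]
    (W : ℤ → Finset E) (x y : E × ℤ)
    (hxy : Relation.ReflTransGen (covers W) x y) :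
    {z : E × ℤ | Relation.ReflTransGen (covers W) x z ∧
      Relation.ReflTransGen (covers W) z y}.Finite := by
  classical
  set S : Finset E := insert 0 ((Finset.Icc 1 (y.2 - x.2)).biUnion W) with hS
  have h0S : (0 : E) ∈ S := Finset.mem_insert_self _ _
  -- key invariant along chains from x
  have key : ∀ z : E × ℤ, Relation.ReflTransGen (covers W) x z →
      x.2 ≤ z.2 ∧ (z.2 ≤ y.2 → z.1 - x.1 ∈ sumIter S (z.2 - x.2).toNat) := by
    intro z hz
    induction hz with
    | refl =>
        refine ⟨le_refl _, fun _ => ?_⟩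
        simp [sumIter]
    | @tail b c hb hc ih =>
        refine ⟨ih.1.trans hc.1.le, fun hcy => ?_⟩
        have hby : b.2 ≤ y.2 := (hc.1.le).trans hcy
        have hb1 := ih.2 hby
        have hw : c.1 - b.1 ∈ S := by
          refine Finset.mem_insert_of_mem (Finset.mem_biUnion.2 ⟨c.2 - b.2, ?_, hc.2⟩)
          have ha := hc.1
          have hb := ih.1
          exact Finset.mem_Icc.2 ⟨by omega, by omega⟩
        have hstep : c.1 - x.1 ∈ sumIter S ((b.2 - x.2).toNat + 1) := by
          have : c.1 - x.1 = (b.1 - x.1) + (c.1 - b.1) := by abel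
          rw [this]
          exact Finset.mem_image₂_of_mem hb1 hw
        refine sumIter_mono h0S ?_ hstep
        have h1 := ih.1
        have h2 := hc.1
        omega
  have hyx : x.2 ≤ y.2 := covers_height_le hxy
  apply Set.Finite.subset (Set.finite_coe_iff.mp ?_)
    (s := ↑((Finset.Icc x.2 y.2).biUnion fun t =>
      (sumIter S ((t - x.2).toNat)).image fun e => ((x.1 + e, t) : E × ℤ)))
  · intro z hz
    obtain ⟨hxz, hzy⟩ := hz
    have h1 := (key z hxz).1
    have h2 := covers_height_le hzy
    have h3 := (key z hxz).2 h2
    simp only [Finset.coe_biUnion, Set.mem_iUnion, Finset.mem_coe, Finset.mem_image]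
    exact ⟨z.2, Finset.mem_Icc.2 ⟨h1, h2⟩, z.1 - x.1, h3, by simp⟩
  · exact (Finset.finite_toSet _).to_subtype
end

section
/- (Proposition 5.1(ii), first part) If Ψ satisfies condition (⋆), then ⪯_Ψ is a partial order on Λ = E × ℤ which refines ⪯: whenever (λ,r) ⪯_Ψ (μ,s), one also has (λ,r) ⪯ (μ,s). -/
open Finset

/-- The partial order `⪯` on `Λ = E × ℤ`: `(λ,r) ⪯ (μ,s)` iff `(λ,r) = (μ,s)`,
or `s > r` and `μ - λ` is a sum of `s - r` elements of `W` (with repetition). -/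
def preceq {E : Type*} [AddCommGroup E] (W : Finset E) (x y : E × ℤ) : Prop :=
  x = y ∨ (x.2 < y.2 ∧
    ∃ ξ : Fin (y.2 - x.2).toNat → E, (∀ i, ξ i ∈ W) ∧ y.1 - x.1 = ∑ i, ξ i)

/-- The refined order `⪯_Ψ` on `Λ = E × ℤ`: `(λ,r) ⪯_Ψ (μ,s)` iff `λ ≤_Ψ μ`
and `d_Ψ(λ,μ) = s - r`. -/
noncomputable def preceqPsi {E : Type*} [AddCommGroup E] (Ψ : Finset E)
    (x y : E × ℤ) : Prop :=
  lePsi Ψ x.1 y.1 ∧ (dPsi Ψ x.1 y.1 : ℤ) = y.2 - x.2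

section Aux
variable {E : Type*} [AddCommGroup E]

lemma exists_fin_rep (Ψ : Finset E) (m : E → ℕ) :
    ∃ ξ : Fin (∑ α ∈ Ψ, m α) → E, (∀ i, ξ i ∈ Ψ) ∧ ∑ i, ξ i = ∑ α ∈ Ψ, m α • α := by
  set M : Multiset E := Ψ.val.bind (fun α => Multiset.replicate (m α) α) with hM
  have hcard : Multiset.card M = ∑ α ∈ Ψ, m α := by
    rw [hM, Multiset.card_bind, Finset.sum]
    congr 1
    exact Multiset.map_congr rfl (fun a _ => Multiset.card_replicate _ _)
  have hsum : M.sum = ∑ α ∈ Ψ, m α • α := by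
    rw [hM, Multiset.sum_bind, Finset.sum]
    congr 1
    exact Multiset.map_congr rfl (fun a _ => Multiset.sum_replicate _ _)
  have hmem : ∀ x ∈ M, x ∈ Ψ := by
    intro x hx
    rw [hM, Multiset.mem_bind] at hx
    obtain ⟨a, ha, hx⟩ := hx
    rw [Multiset.eq_of_mem_replicate hx]
    exact ha
  have hlen : M.toList.length = ∑ α ∈ Ψ, m α := by
    rw [Multiset.length_toList, hcard]
  refine ⟨fun i => M.toList.get (Fin.cast hlen.symm i), fun i => ?_, ?_⟩
  · exact hmem _ (Multiset.mem_toList.1 (List.get_mem _ _))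
  · rw [← hsum, ← Multiset.sum_toList, ← Fin.sum_univ_getElem]
    exact Fintype.sum_equiv (finCongr hlen.symm) _ _ (fun i => rfl)

variable {W Ψ : Finset E} (hΨW : Ψ ⊆ W) (hstar : StarCond W Ψ)

include hΨW hstar in
lemma total_unique (m m' : E → ℕ)
    (h : (∑ α ∈ Ψ, m α • α) = ∑ α ∈ Ψ, m' α • α) :
    (∑ α ∈ Ψ, m α) = ∑ α ∈ Ψ, m' α := by
  classical
  have key : ∀ m m' : E → ℕ, (∑ α ∈ Ψ, m α • α) = (∑ α ∈ Ψ, m' α • α) →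
      (∑ α ∈ Ψ, m α) ≤ ∑ α ∈ Ψ, m' α := by
    intro m m' h
    set r : E → ℕ := fun β => if β ∈ Ψ then m' β else 0 with hr
    have h1 : (∑ β ∈ W, r β • β) = ∑ α ∈ Ψ, m' α • α := by
      rw [← Finset.sum_subset hΨW (fun β _ hβ => by simp [hr, hβ])]
      exact Finset.sum_congr rfl (fun β hβ => by simp [hr, hβ])
    have h2 : (∑ β ∈ W, r β) = ∑ α ∈ Ψ, m' α := by
      rw [← Finset.sum_subset hΨW (fun β _ hβ => by simp [hr, hβ])]
      exact Finset.sum_congr rfl (fun β hβ => by simp [hr, hβ])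
    have := (hstar m r (by rw [h1, h])).1
    rwa [h2] at this
  exact le_antisymm (key m m' h) (key m' m h.symm)

include hΨW hstar in
lemma dPsi_eq {μ ν : E} (m : E → ℕ) (h : ν - μ = ∑ α ∈ Ψ, m α • α) :
    dPsi Ψ μ ν = ∑ α ∈ Ψ, m α := by
  refine le_antisymm (Nat.sInf_le ⟨m, h, rfl⟩) (le_csInf ⟨_, m, h, rfl⟩ ?_)
  rintro n ⟨m', h', rfl⟩
  exact (total_unique hΨW hstar m' m (by rw [← h, ← h'])).ge

end Aux

theorem preceqPsi_partialOrder_refines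
    (E : Type*) [AddCommGroup E] [Module ℂ E] [FiniteDimensional ℂ E]
    (W Ψ : Finset E) (hΨW : Ψ ⊆ W) (hne : Ψ.Nonempty)
    (hstar : StarCond W Ψ) :
    Reflexive (preceqPsi Ψ) ∧ Transitive (preceqPsi Ψ) ∧
    AntiSymmetric (preceqPsi Ψ) ∧
    (∀ x y : E × ℤ, preceqPsi Ψ x y → preceq W x y) := by
  have hrefl : Reflexive (preceqPsi Ψ) := by
    intro x
    refine ⟨⟨fun _ => 0, by simp⟩, ?_⟩
    rw [dPsi_eq hΨW hstar (fun _ => 0) (by simp)]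
    simp
  have hzero : ∀ μ ν : E, lePsi Ψ μ ν → dPsi Ψ μ ν = 0 → μ = ν := by
    rintro μ ν ⟨m, hm⟩ hd
    rw [dPsi_eq hΨW hstar m hm] at hd
    have hz : ∀ α ∈ Ψ, m α = 0 := (Finset.sum_eq_zero_iff).1 hd
    have : ν - μ = 0 := by
      rw [hm]; exact Finset.sum_eq_zero (fun α hα => by rw [hz α hα, zero_smul])
    exact (sub_eq_zero.1 this).symm
  refine ⟨hrefl, ?_, ?_, ?_⟩
  · rintro x y z ⟨⟨m1, h1⟩, hd1⟩ ⟨⟨m2, h2⟩, hd2⟩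
    have h3 : z.1 - x.1 = ∑ α ∈ Ψ, (m1 α + m2 α) • α := by
      have hzx : z.1 - x.1 = (y.1 - x.1) + (z.1 - y.1) := by abel
      rw [hzx, h1, h2, ← Finset.sum_add_distrib]
      exact Finset.sum_congr rfl (fun α _ => (add_smul _ _ _).symm)
    refine ⟨⟨_, h3⟩, ?_⟩
    rw [dPsi_eq hΨW hstar m1 h1] at hd1
    rw [dPsi_eq hΨW hstar m2 h2] at hd2
    rw [dPsi_eq hΨW hstar _ h3, Finset.sum_add_distrib, Nat.cast_add]
    omega
  · rintro x y ⟨hle1, hd1⟩ ⟨hle2, hd2⟩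
    have h0 : dPsi Ψ x.1 y.1 = 0 := by omega
    exact Prod.ext (hzero _ _ hle1 h0) (by omega)
  · rintro x y ⟨⟨m, hm⟩, hd⟩
    rw [dPsi_eq hΨW hstar m hm] at hd
    rcases Nat.eq_zero_or_pos (∑ α ∈ Ψ, m α) with h0 | hpos
    · left
      have := hzero x.1 y.1 ⟨m, hm⟩ (by rw [dPsi_eq hΨW hstar m hm]; exact h0)
      exact Prod.ext this (by omega)
    · right
      have hlt : x.2 < y.2 := by omega
      have hn : (y.2 - x.2).toNat = ∑ α ∈ Ψ, m α := by omega
      obtain ⟨ξ, hξΨ, hξsum⟩ := exists_fin_rep Ψ m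
      refine ⟨hlt, fun i => ξ (Fin.cast hn i), fun i => hΨW (hξΨ _), ?_⟩
      rw [hm, ← hξsum]
      exact (Fintype.sum_equiv (finCongr hn) _ _ (fun i => rfl)).symm
end

section
/- (Proposition 5.1(ii), second part) Suppose Ψ satisfies condition (⋆) and (ν,r) ⪯_Ψ (μ,s) in Λ = E × ℤ. Then the ⪯-interval and the ⪯_Ψ-interval from (ν,r) to (μ,s) coincide: {(η,t) ∈ Λ : (ν,r) ⪯ (η,t) ⪯ (μ,s)} = {(η,t) ∈ Λ : (ν,r) ⪯_Ψ (η,t) ⪯_Ψ (μ,s)}. -/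
open Finset

-- Lemma A: multiplicity rep -> indexed family
lemma rep_to_fin {E : Type*} [AddCommGroup E] (Ψ : Finset E) (m : E → ℕ) (n : ℕ)
    (h : ∑ α ∈ Ψ, m α = n) :
    ∃ ξ : Fin n → E, (∀ i, ξ i ∈ Ψ) ∧ ∑ i, ξ i = ∑ α ∈ Ψ, m α • α := by
  classical
  subst h
  set M : Multiset E := ∑ α ∈ Ψ, Multiset.replicate (m α) α with hM
  have hcard : Multiset.card M = ∑ α ∈ Ψ, m α := by
    simp [hM, map_sum]
  have hsum : M.sum = ∑ α ∈ Ψ, m α • α := by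
    simp [hM, Multiset.sum_sum, Multiset.sum_replicate]
  have hmem : ∀ a ∈ M, a ∈ Ψ := by
    intro a ha
    rw [hM, Multiset.mem_sum] at ha
    obtain ⟨α, hα, ha⟩ := ha
    rw [Multiset.eq_of_mem_replicate ha]; exact hα
  set l := M.toList with hl
  have hlen : l.length = ∑ α ∈ Ψ, m α := by simp [hl, hcard]
  refine ⟨fun i => l.get (Fin.cast hlen.symm i), fun i => ?_, ?_⟩
  · exact hmem _ (Multiset.mem_toList.mp (l.get_mem _))
  · have : ∑ i : Fin l.length, l.get i = l.sum := by
      simp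
    rw [← hsum, ← Multiset.sum_toList M, ← this]
    exact Fin.sum_congr' _ hlen.symm

lemma fin_to_rep {E : Type*} [AddCommGroup E] (S : Finset E) (n : ℕ) (ξ : Fin n → E)
    (hξ : ∀ i, ξ i ∈ S) :
    ∃ r : E → ℕ, (∑ β ∈ S, r β • β = ∑ i, ξ i) ∧ (∑ β ∈ S, r β = n) ∧
      ∀ i, 0 < r (ξ i) := by
  classical
  refine ⟨fun β => (univ.filter (fun i => ξ i = β)).card, ?_, ?_, ?_⟩
  · rw [← Finset.sum_fiberwise_of_maps_to (fun i _ => hξ i) ξ]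
    refine Finset.sum_congr rfl fun β _ => ?_
    rw [← Finset.sum_const]
    exact Finset.sum_congr rfl fun i hi => ((Finset.mem_filter.mp hi).2).symm
  · simpa using (Finset.card_eq_sum_card_fiberwise (fun i (_ : i ∈ univ) => hξ i)).symm
  · intro i
    rw [Finset.card_pos]
    exact ⟨i, Finset.mem_filter.mpr ⟨Finset.mem_univ i, rfl⟩⟩

section helpers
variable {E : Type*} [AddCommGroup E]

lemma dPsi_le (Ψ : Finset E) (μ ν : E) (m : E → ℕ) (h : ν - μ = ∑ α ∈ Ψ, m α • α) :
    dPsi Ψ μ ν ≤ ∑ α ∈ Ψ, m α :=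
  Nat.sInf_le ⟨m, h, rfl⟩

lemma dPsi_spec (Ψ : Finset E) (μ ν : E) (h : lePsi Ψ μ ν) :
    ∃ m : E → ℕ, (ν - μ = ∑ α ∈ Ψ, m α • α) ∧ dPsi Ψ μ ν = ∑ α ∈ Ψ, m α := by
  obtain ⟨m, hm⟩ := h
  exact Nat.sInf_mem (⟨∑ α ∈ Ψ, m α, m, hm, rfl⟩ :
    Set.Nonempty {n : ℕ | ∃ m : E → ℕ, (ν - μ = ∑ α ∈ Ψ, m α • α) ∧ n = ∑ α ∈ Ψ, m α})

lemma dPsi_self (Ψ : Finset E) (μ : E) : dPsi Ψ μ μ = 0 :=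
  Nat.sInf_eq_zero.mpr (Or.inl ⟨fun _ => 0, by simp⟩)

lemma lePsi_self (Ψ : Finset E) (μ : E) : lePsi Ψ μ μ := ⟨fun _ => 0, by simp⟩

lemma dPsi_triangle (Ψ : Finset E) (μ ν η : E) (h1 : lePsi Ψ μ ν) (h2 : lePsi Ψ ν η) :
    dPsi Ψ μ η ≤ dPsi Ψ μ ν + dPsi Ψ ν η := by
  obtain ⟨m1, hm1, hd1⟩ := dPsi_spec Ψ μ ν h1
  obtain ⟨m2, hm2, hd2⟩ := dPsi_spec Ψ ν η h2
  have : η - μ = ∑ α ∈ Ψ, (m1 α + m2 α) • α := by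
    simp only [add_smul, Finset.sum_add_distrib, ← hm1, ← hm2]
    abel
  calc dPsi Ψ μ η ≤ ∑ α ∈ Ψ, (m1 α + m2 α) := dPsi_le Ψ μ η _ this
    _ = dPsi Ψ μ ν + dPsi Ψ ν η := by rw [Finset.sum_add_distrib, hd1, hd2]

lemma preceq_of_preceqPsi (W Ψ : Finset E) (hΨW : Ψ ⊆ W) (x z : E × ℤ)
    (h : preceqPsi Ψ x z) : preceq W x z := by
  obtain ⟨hle, hd⟩ := h
  obtain ⟨m, hm, hdm⟩ := dPsi_spec Ψ x.1 z.1 hle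
  rcases Nat.eq_zero_or_pos (dPsi Ψ x.1 z.1) with h0 | hpos
  · left
    have hm0 : ∀ α ∈ Ψ, m α = 0 := by
      rw [h0] at hdm; exact fun α hα => (Finset.sum_eq_zero_iff.mp hdm.symm) α hα
    have h1 : z.1 = x.1 := by
      have : z.1 - x.1 = 0 := by
        rw [hm]; exact Finset.sum_eq_zero fun α hα => by rw [hm0 α hα, zero_smul]
      exact sub_eq_zero.mp this
    have h2 : x.2 = z.2 := by rw [h0] at hd; push_cast at hd; omega
    exact Prod.ext h1.symm h2
  · right
    have hlt : x.2 < z.2 := by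
      have : (0 : ℤ) < dPsi Ψ x.1 z.1 := by exact_mod_cast hpos
      omega
    have hn : (z.2 - x.2).toNat = ∑ α ∈ Ψ, m α := by omega
    obtain ⟨ξ, hξΨ, hξsum⟩ := rep_to_fin Ψ m _ hn.symm
    exact ⟨hlt, ξ, fun i => hΨW (hξΨ i), by rw [hξsum, ← hm]⟩

end helpers

theorem preceq_interval_eq_preceqPsi_interval
    (E : Type*) [AddCommGroup E] [Module ℂ E] [FiniteDimensional ℂ E]
    (W Ψ : Finset E) (hΨW : Ψ ⊆ W) (hne : Ψ.Nonempty)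
    (hstar : StarCond W Ψ)
    (x y : E × ℤ) (hxy : preceqPsi Ψ x y) :
    {z : E × ℤ | preceq W x z ∧ preceq W z y} =
      {z : E × ℤ | preceqPsi Ψ x z ∧ preceqPsi Ψ z y} := by
  ext z
  simp only [Set.mem_setOf_eq]
  constructor
  · rintro ⟨hxz, hzy⟩
    rcases hxz with rfl | ⟨hlt1, ξ1, hξ1W, hs1⟩
    · exact ⟨⟨lePsi_self Ψ x.1, by rw [dPsi_self]; push_cast; ring⟩, hxy⟩
    rcases hzy with rfl | ⟨hlt2, ξ2, hξ2W, hs2⟩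
    · exact ⟨hxy, ⟨lePsi_self Ψ z.1, by rw [dPsi_self]; push_cast; ring⟩⟩
    -- main case
    obtain ⟨hlexy, hdxy⟩ := hxy
    obtain ⟨m0, hm0, hdm0⟩ := dPsi_spec Ψ x.1 y.1 hlexy
    obtain ⟨r1, hr1sum, hr1tot, hr1pos⟩ := fin_to_rep W _ ξ1 hξ1W
    obtain ⟨r2, hr2sum, hr2tot, hr2pos⟩ := fin_to_rep W _ ξ2 hξ2W
    have hrep : ∑ α ∈ Ψ, m0 α • α = ∑ β ∈ W, (r1 β + r2 β) • β := by
      simp only [add_smul, Finset.sum_add_distrib, hr1sum, hr2sum, ← hs1, ← hs2, ← hm0]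
      abel
    obtain ⟨hle, heq⟩ := hstar m0 (fun β => r1 β + r2 β) hrep
    have hrtot : ∑ β ∈ W, (r1 β + r2 β) = (z.2 - x.2).toNat + (y.2 - z.2).toNat := by
      rw [Finset.sum_add_distrib, hr1tot, hr2tot]
    have hpq : ((z.2 - x.2).toNat : ℤ) + (y.2 - z.2).toNat = dPsi Ψ x.1 y.1 := by omega
    have heqtot : ∑ α ∈ Ψ, m0 α = ∑ β ∈ W, (r1 β + r2 β) := by omega
    have hmemΨ := heq heqtot
    -- elements of ξ1, ξ2 are in Ψ
    have hξ1Ψ : ∀ i, ξ1 i ∈ Ψ := fun i =>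
      hmemΨ _ (hξ1W i) (lt_of_lt_of_le (hr1pos i) (Nat.le_add_right _ _))
    have hξ2Ψ : ∀ i, ξ2 i ∈ Ψ := fun i =>
      hmemΨ _ (hξ2W i) (lt_of_lt_of_le (hr2pos i) (Nat.le_add_left _ _))
    obtain ⟨s1, hs1sum, hs1tot, _⟩ := fin_to_rep Ψ _ ξ1 hξ1Ψ
    obtain ⟨s2, hs2sum, hs2tot, _⟩ := fin_to_rep Ψ _ ξ2 hξ2Ψ
    have hlexz : lePsi Ψ x.1 z.1 := ⟨s1, by rw [hs1, ← hs1sum]⟩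
    have hlezy : lePsi Ψ z.1 y.1 := ⟨s2, by rw [hs2, ← hs2sum]⟩
    have hd1 : dPsi Ψ x.1 z.1 ≤ (z.2 - x.2).toNat := by
      have := dPsi_le Ψ x.1 z.1 s1 (by rw [hs1, ← hs1sum]); omega
    have hd2 : dPsi Ψ z.1 y.1 ≤ (y.2 - z.2).toNat := by
      have := dPsi_le Ψ z.1 y.1 s2 (by rw [hs2, ← hs2sum]); omega
    have htri := dPsi_triangle Ψ x.1 z.1 y.1 hlexz hlezy
    have hd1' : (dPsi Ψ x.1 z.1 : ℤ) = z.2 - x.2 := by omega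
    have hd2' : (dPsi Ψ z.1 y.1 : ℤ) = y.2 - z.2 := by omega
    exact ⟨⟨hlexz, hd1'⟩, ⟨hlezy, hd2'⟩⟩
  · rintro ⟨hxz, hzy⟩
    exact ⟨preceq_of_preceqPsi W Ψ hΨW x z hxz, preceq_of_preceqPsi W Ψ hΨW z y hzy⟩
end

section
/- (combinatorial core of Lemma 5.5(i)–(ii)) Suppose Ψ satisfies condition (⋆), and let μ, ν, ν' ∈ E with μ ≤_Ψ ν' and μ ≤_Ψ ν. If ν − ν' = ξ_1 + ⋯ + ξ_t where each ξ_i ∈ W and t = d_Ψ(μ,ν) − d_Ψ(μ,ν'), then every ξ_i belongs to Ψ; in particular ν' ≤_Ψ ν and d_Ψ(ν',ν) = t. -/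
open Finset

theorem lemma55_combinatorial_core
    (E : Type*) [AddCommGroup E] [Module ℂ E] [FiniteDimensional ℂ E]
    (W Ψ : Finset E) (hΨW : Ψ ⊆ W) (hne : Ψ.Nonempty)
    (hstar : StarCond W Ψ)
    (μ ν ν' : E) (hν' : lePsi Ψ μ ν') (hν : lePsi Ψ μ ν)
    (t : ℕ) (ξ : Fin t → E) (hξ : ∀ i, ξ i ∈ W)
    (hsum : ν - ν' = ∑ i, ξ i)
    (ht : (t : ℤ) = (dPsi Ψ μ ν : ℤ) - (dPsi Ψ μ ν' : ℤ)) :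
    (∀ i, ξ i ∈ Ψ) ∧ lePsi Ψ ν' ν ∧ dPsi Ψ ν' ν = t := by
  classical
  obtain ⟨m0, hm0⟩ := hν'
  obtain ⟨m1, hm1⟩ := hν
  -- minimizers
  obtain ⟨m', hm'rep, hm'sum⟩ :
      ∃ m : E → ℕ, (ν' - μ = ∑ α ∈ Ψ, m α • α) ∧ dPsi Ψ μ ν' = ∑ α ∈ Ψ, m α :=
    Nat.sInf_mem (⟨∑ α ∈ Ψ, m0 α, m0, hm0, rfl⟩ :
      {n : ℕ | ∃ m : E → ℕ, (ν' - μ = ∑ α ∈ Ψ, m α • α) ∧ n = ∑ α ∈ Ψ, m α}.Nonempty)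
  obtain ⟨m, hmrep, hmsum⟩ :
      ∃ mm : E → ℕ, (ν - μ = ∑ α ∈ Ψ, mm α • α) ∧ dPsi Ψ μ ν = ∑ α ∈ Ψ, mm α :=
    Nat.sInf_mem (⟨∑ α ∈ Ψ, m1 α, m1, hm1, rfl⟩ :
      {n : ℕ | ∃ m : E → ℕ, (ν - μ = ∑ α ∈ Ψ, m α • α) ∧ n = ∑ α ∈ Ψ, m α}.Nonempty)
  -- fiber counts
  set c : E → ℕ := fun β => (Finset.univ.filter (fun i => ξ i = β)).card with hc
  have hfib : ∀ (s : Finset E), (∀ i, ξ i ∈ s) →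
      (∑ β ∈ s, c β • β = ∑ i, ξ i) ∧ (∑ β ∈ s, c β = t) := by
    intro s hs
    constructor
    · rw [← Finset.sum_fiberwise_of_maps_to (fun i _ => hs i) ξ]
      refine Finset.sum_congr rfl fun β _ => ?_
      rw [Finset.sum_congr rfl (fun i hi => (Finset.mem_filter.mp hi).2),
        Finset.sum_const]
    · have := Finset.card_eq_sum_card_fiberwise (fun i (_ : i ∈ Finset.univ) => hs i)
      simpa using this.symm
  obtain ⟨hc1, hc2⟩ := hfib W hξ
  -- the combined coefficient family over W
  set r : E → ℕ := fun β => (if β ∈ Ψ then m' β else 0) + c β with hr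
  have hite1 : ∑ β ∈ W, (if β ∈ Ψ then m' β else 0) • β = ∑ α ∈ Ψ, m' α • α := by
    rw [← Finset.sum_subset hΨW (fun β _ hβ => by simp [hβ])]
    exact Finset.sum_congr rfl fun β hβ => by simp [hβ]
  have hite2 : ∑ β ∈ W, (if β ∈ Ψ then m' β else 0) = ∑ α ∈ Ψ, m' α := by
    rw [← Finset.sum_subset hΨW (fun β _ hβ => by simp [hβ])]
    exact Finset.sum_congr rfl fun β hβ => by simp [hβ]
  have hmain : ∑ α ∈ Ψ, m α • α = ∑ β ∈ W, r β • β := by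
    have : ∑ β ∈ W, r β • β
        = (∑ β ∈ W, (if β ∈ Ψ then m' β else 0) • β) + ∑ β ∈ W, c β • β := by
      rw [← Finset.sum_add_distrib]
      exact Finset.sum_congr rfl fun β _ => by rw [hr]; rw [add_smul]
    rw [this, hite1, hc1, ← hm'rep, ← hsum, ← hmrep]
    abel
  have hrsum : ∑ β ∈ W, r β = dPsi Ψ μ ν' + t := by
    have : ∑ β ∈ W, r β
        = (∑ β ∈ W, (if β ∈ Ψ then m' β else 0)) + ∑ β ∈ W, c β :=
      Finset.sum_add_distrib
    rw [this, hite2, hc2, hm'sum]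
  have hdd : dPsi Ψ μ ν = dPsi Ψ μ ν' + t := by omega
  obtain ⟨hle, heq⟩ := hstar m r hmain
  have hsums : ∑ α ∈ Ψ, m α = ∑ β ∈ W, r β := by
    rw [hrsum, ← hmsum, hdd]
  have hΨmem : ∀ i, ξ i ∈ Ψ := by
    intro i
    refine heq hsums (ξ i) (hξ i) ?_
    have : 0 < c (ξ i) := by
      rw [hc]
      exact Finset.card_pos.mpr ⟨i, by simp⟩
    simp only [hr]; omega
  obtain ⟨hc1', hc2'⟩ := hfib Ψ hΨmem
  have hrep' : ν - ν' = ∑ α ∈ Ψ, c α • α := by rw [hsum, hc1']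
  refine ⟨hΨmem, ⟨c, hrep'⟩, le_antisymm ?_ ?_⟩
  · calc dPsi Ψ ν' ν ≤ ∑ α ∈ Ψ, c α := Nat.sInf_le ⟨c, hrep', rfl⟩
      _ = t := hc2'
  · -- t ≤ dPsi Ψ ν' ν
    obtain ⟨k, hkrep, hksum⟩ :
        ∃ k : E → ℕ, (ν - ν' = ∑ α ∈ Ψ, k α • α) ∧ dPsi Ψ ν' ν = ∑ α ∈ Ψ, k α :=
      Nat.sInf_mem (⟨∑ α ∈ Ψ, c α, c, hrep', rfl⟩ :
        {n : ℕ | ∃ m : E → ℕ, (ν - ν' = ∑ α ∈ Ψ, m α • α) ∧ n = ∑ α ∈ Ψ, m α}.Nonempty)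
    have hcomb : ν - μ = ∑ α ∈ Ψ, (k α + m' α) • α := by
      have : ν - μ = (ν - ν') + (ν' - μ) := by abel
      rw [this, hkrep, hm'rep, ← Finset.sum_add_distrib]
      exact Finset.sum_congr rfl fun α _ => (add_smul _ _ _).symm
    have hdle : dPsi Ψ μ ν ≤ ∑ α ∈ Ψ, (k α + m' α) :=
      Nat.sInf_le ⟨fun α => k α + m' α, hcomb, rfl⟩
    have : ∑ α ∈ Ψ, (k α + m' α) = dPsi Ψ ν' ν + dPsi Ψ μ ν' := by
      rw [Finset.sum_add_distrib, hksum, hm'sum]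
    omega
end

section
/- (finiteness of Ψ-intervals, used in the proof of Theorem 1.6) Suppose Ψ satisfies condition (⋆). Then for all μ ≤_Ψ ν in E, the interval [μ,ν]_Ψ := {η ∈ E : μ ≤_Ψ η ≤_Ψ ν} is a finite set. -/
open Finset

theorem interval_Psi_finite
    (E : Type*) [AddCommGroup E] [Module ℂ E] [FiniteDimensional ℂ E]
    (W Ψ : Finset E) (hΨW : Ψ ⊆ W) (hne : Ψ.Nonempty)
    (hstar : StarCond W Ψ)
    (μ ν : E) (hle : lePsi Ψ μ ν) :
    {η : E | lePsi Ψ μ η ∧ lePsi Ψ η ν}.Finite := by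
  obtain ⟨m₀, hm₀⟩ := hle
  set N : ℕ := ∑ α ∈ Ψ, m₀ α with hN
  set g : (Ψ → Fin (N + 1)) → E :=
    fun f => μ + ∑ α ∈ Ψ.attach, ((f α : ℕ)) • (α : E) with hg
  apply Set.Finite.subset (Set.finite_range g)
  rintro η ⟨⟨a, ha⟩, ⟨b, hb⟩⟩
  classical
  -- ν - μ = ∑ (a + b) α • α
  have hsum : ν - μ = ∑ α ∈ Ψ, (a α + b α) • α := by
    have : ν - μ = (ν - η) + (η - μ) := by abel
    rw [this, hb, ha, ← Finset.sum_add_distrib]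
    congr 1; ext α; rw [add_smul, add_comm]
  -- extend m₀ by zero to W
  set r : E → ℕ := fun β => if β ∈ Ψ then m₀ β else 0 with hr
  have hrW : ∑ β ∈ W, r β • β = ∑ α ∈ Ψ, m₀ α • α := by
    rw [← Finset.sum_subset hΨW]
    · exact Finset.sum_congr rfl fun β hβ => by simp [hr, hβ]
    · intro β _ hβ; simp [hr, hβ]
  have hrN : ∑ β ∈ W, r β = N := by
    rw [hN, ← Finset.sum_subset hΨW]
    · exact Finset.sum_congr rfl fun β hβ => by simp [hr, hβ]
    · intro β _ hβ; simp [hr, hβ]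
  have hstar' := hstar (fun α => a α + b α) r (by rw [← hsum, hrW, ← hm₀])
  have htot : ∑ α ∈ Ψ, (a α + b α) ≤ N := hrN ▸ hstar'.1
  have hbd : ∀ α ∈ Ψ, a α ≤ N := by
    intro α hα
    calc a α ≤ a α + b α := Nat.le_add_right _ _
      _ ≤ ∑ α ∈ Ψ, (a α + b α) :=
        Finset.single_le_sum (f := fun α => a α + b α) (fun _ _ => Nat.zero_le _) hα
      _ ≤ N := htot
  refine ⟨fun α => ⟨a α, Nat.lt_succ_of_le (hbd α α.2)⟩, ?_⟩
  simp only [hg]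
  have : ∑ α ∈ Ψ.attach, a (α : E) • (α : E) = ∑ α ∈ Ψ, a α • α :=
    Finset.sum_attach Ψ (fun α => a α • α)
  rw [this, ← ha]
  abel
end
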